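/- arXiv:1908.09034 — 5 statements merged into one kernel-verified Lean document; each statement's English description precedes it below -/
import Mathlib

section
/- Let x > 0 be a real number. The function u ↦ (x − u)²·u + (4/27)·(x − 2u)³, restricted to the interval [0, x/2], attains its maximum at u = x/5, and the maximum value equals (4/25)·x³. -/
/-- For `x > 0`, the function `u ↦ (x − u)² * u + (4/27) * (x − 2u)³` on `[0, x/2]`
attains its maximum at `u = x/5`, with maximum value `(4/25) * x³`. -/
theorem stmt_1 (x : ℝ) (hx : 0 < x) :
    x / 5 ∈ Set.Icc (0 : ℝ) (x / 2) ∧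
    IsMaxOn (fun u : ℝ => (x - u) ^ 2 * u + 4 / 27 * (x - 2 * u) ^ 3)
      (Set.Icc 0 (x / 2)) (x / 5) ∧
    (x - x / 5) ^ 2 * (x / 5) + 4 / 27 * (x - 2 * (x / 5)) ^ 3 = 4 / 25 * x ^ 3 := by
  refine ⟨⟨by positivity, by linarith⟩, ?_, by ring⟩
  intro u hu
  obtain ⟨h0, h1⟩ := hu
  simp only [Set.mem_setOf_eq]
  nlinarith [sq_nonneg (u - x / 5), sq_nonneg (u + x), mul_nonneg h0 (sq_nonneg (u - x/5)), mul_nonneg (sub_nonneg.2 h1) (sq_nonneg (u - x/5)), sq_nonneg u]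
end

section
/- Let N be a natural number and define functions V_k : {x : ℝ | x ≥ 0} → ℝ for k = 0,…,N by the backward recursion V_N(x) := 0 and V_k(x) := sup { (x − u)²·u + V_{k+1}(x − 2u) : u ∈ [0, x/2] } for k = N−1,…,0. Then each V_k is positively homogeneous of degree 3: for every λ ≥ 0 and every x ≥ 0, V_k(λ·x) = λ³·V_k(x). -/
/-- The deterministic dynamic-programming value functions
`V N x = 0`, `V k x = sup { (x−u)²u + V (k+1) (x−2u) : u ∈ [0, x/2] }` (for `x ≥ 0`)
are positively homogeneous of degree 3 on nonnegative states. -/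
theorem stmt_2 (N : ℕ) (V : ℕ → ℝ → ℝ)
    (hVN : ∀ x : ℝ, 0 ≤ x → V N x = 0)
    (hV : ∀ k < N, ∀ x : ℝ, 0 ≤ x →
      V k x = sSup ((fun u : ℝ => (x - u) ^ 2 * u + V (k + 1) (x - 2 * u)) ''
        Set.Icc 0 (x / 2))) :
    ∀ k ≤ N, ∀ lam : ℝ, 0 ≤ lam → ∀ x : ℝ, 0 ≤ x →
      V k (lam * x) = lam ^ 3 * V k x := by
  suffices h : ∀ j k, k + j = N → ∀ lam : ℝ, 0 ≤ lam → ∀ x : ℝ, 0 ≤ x →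
      V k (lam * x) = lam ^ 3 * V k x by
    intro k hk lam hlam x hx
    exact h (N - k) k (by omega) lam hlam x hx
  intro j
  induction j with
  | zero =>
    intro k hk lam hlam x hx
    have hkN : k = N := by omega
    subst hkN
    rw [hVN _ (by positivity), hVN _ hx, mul_zero]
  | succ j ih =>
    intro k hk lam hlam x hx
    have hkN : k < N := by omega
    have ih' := ih (k + 1) (by omega)
    have hV10 : V (k + 1) 0 = 0 := by
      have := ih' 0 le_rfl 0 le_rfl
      simpa using this
    have hVk0 : V k 0 = 0 := by
      rw [hV k hkN 0 le_rfl]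
      norm_num
      exact hV10
    rcases eq_or_lt_of_le hlam with h0 | hpos
    · rw [← h0]
      simp [hVk0]
    · rw [hV k hkN _ (by positivity), hV k hkN x hx]
      have himg : (fun u : ℝ => (lam * x - u) ^ 2 * u + V (k + 1) (lam * x - 2 * u)) ''
          Set.Icc 0 (lam * x / 2)
          = (fun y => lam ^ 3 * y) ''
            ((fun u : ℝ => (x - u) ^ 2 * u + V (k + 1) (x - 2 * u)) '' Set.Icc 0 (x / 2)) := by
        have hIcc : Set.Icc (0 : ℝ) (lam * x / 2) = (fun v => lam * v) '' Set.Icc 0 (x / 2) := by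
          rw [Set.image_mul_left_Icc' hpos]
          norm_num
          ring_nf
        rw [hIcc, Set.image_image, Set.image_image]
        apply Set.image_congr
        intro v hv
        obtain ⟨hv0, hv2⟩ := hv
        have hxv : (0 : ℝ) ≤ x - 2 * v := by linarith
        have hrec := ih' lam hlam (x - 2 * v) hxv
        have : lam * x - 2 * (lam * v) = lam * (x - 2 * v) := by ring
        rw [this]
        rw [hrec]
        ring
      rw [himg]
      have := Real.sSup_smul_of_nonneg (a := lam ^ 3) (by positivity)
        ((fun u : ℝ => (x - u) ^ 2 * u + V (k + 1) (x - 2 * u)) '' Set.Icc 0 (x / 2))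
      rw [smul_eq_mul] at this
      rw [← this]
      congr 1
end

section
/- Fix N ∈ ℕ and real sequences μ_{a,k}, Σ_{a,k}, Γ_{a,k}, μ_{b,k}, Σ_{b,k}, Γ_{b,k} for k = 0,…,N−1. Define backward: Q_N := 0 and, for k = N−1,…,0, A_k := Q_{k+1}·Γ_{b,k} + 1, B_k := 3·Q_{k+1}·Σ_{b,k}·μ_{a,k} − 2, C_k := 3·Q_{k+1}·Σ_{a,k}·μ_{b,k} + 1, D_k := B_k² − 3·A_k·C_k, ψ_k := −(B_k + √D_k)/(3·A_k), ψ̄_k := (−B_k + √D_k)/(3·A_k), and Q_k := (1 − ψ_k)²·ψ_k + Q_{k+1}·(Γ_{a,k} + Γ_{b,k}·ψ_k³ + 3·Σ_{b,k}·μ_{a,k}·ψ_k² + 3·Σ_{a,k}·μ_{b,k}·ψ_k). On a probability space, for each k let a_k, b_k be independent real-valued random variables with finite third absolute moments and raw moments E[a_k] = μ_{a,k}, E[a_k²] = Σ_{a,k}, E[a_k³] = Γ_{a,k}, E[b_k] = μ_{b,k}, E[b_k²] = Σ_{b,k}, E[b_k³] = Γ_{b,k}. Define V_N : ℝ → ℝ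 by V_N := 0 and, for k = N−1,…,0, V_k(x) := sup { (x − u)²·u + E[V_{k+1}(a_k·x + b_k·u)] : u ∈ [0, x/2] } for x ≥ 0, and V_k(x) := Q_k·x³ for x < 0. Assume for every k that A_k > 0, D_k ≥ 0, 0 ≤ ψ_k ≤ 1/2, and ψ̄_k ≥ 1/2. Then for every k and every x ≥ 0, V_k(x) = Q_k·x³, and the supremum defining V_k(x) is attained at u = ψ_k·x. -/
open MeasureTheory ProbabilityTheory

lemma key_ineq (A B C D p q x u : ℝ) (hApos : 0 < A) (hDnn : 0 ≤ D)
    (hD : D = B ^ 2 - 3 * A * C)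
    (hp : p = -(B + Real.sqrt D) / (3 * A)) (hq : q = (-B + Real.sqrt D) / (3 * A))
    (hph : p ≤ 1 / 2) (hqge : 1 / 2 ≤ q)
    (hx : 0 ≤ x) (hux : u ≤ x / 2) :
    A * u ^ 3 + B * x * u ^ 2 + C * x ^ 2 * u ≤
      A * (p * x) ^ 3 + B * x * (p * x) ^ 2 + C * x ^ 2 * (p * x) := by
  set s := Real.sqrt D with hs_def
  have hs : s ^ 2 = D := Real.sq_sqrt hDnn
  have hA' : (3 * A) ≠ 0 := by positivity
  have h1 : 3 * A * p = -(B + s) := by rw [hp]; field_simp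
  have h2 : 3 * A * q = -B + s := by rw [hq]; field_simp
  have hBs : B = -(3 * A) * (p + q) / 2 := by linarith
  have h3 : (3 * A * p) * (3 * A * q) = B ^ 2 - s ^ 2 := by rw [h1, h2]; ring
  have h4 : (3 * A) * ((3 * A) * (p * q)) = (3 * A) * C := by linear_combination h3 - hs - hD
  have hCs : C = 3 * A * (p * q) := (mul_left_cancel₀ hA' h4).symm
  have hid : A * (p * x) ^ 3 + B * x * (p * x) ^ 2 + C * x ^ 2 * (p * x)
      - (A * u ^ 3 + B * x * u ^ 2 + C * x ^ 2 * u)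
      = A * (p * x - u) ^ 2 * ((3 * q - p) * x / 2 - u) := by
    rw [hBs, hCs]; ring
  have hfac : 0 ≤ (3 * q - p) * x / 2 - u := by nlinarith
  nlinarith [sq_nonneg (p * x - u), mul_nonneg (mul_nonneg hApos.le (sq_nonneg (p * x - u))) hfac]

lemma cubic_moment {Ω : Type*} [MeasurableSpace Ω] (μ : Measure Ω) [IsProbabilityMeasure μ]
    (a b : Ω → ℝ) (ha : Measurable a) (hb : Measurable b) (hab : IndepFun a b μ)
    (ha3 : Integrable (fun ω => |a ω| ^ 3) μ) (hb3 : Integrable (fun ω => |b ω| ^ 3) μ)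
    (x u : ℝ) :
    ∫ ω, (a ω * x + b ω * u) ^ 3 ∂μ
      = (∫ ω, a ω ^ 3 ∂μ) * x ^ 3
        + 3 * ((∫ ω, a ω ^ 2 ∂μ) * (∫ ω, b ω ∂μ)) * x ^ 2 * u
        + 3 * ((∫ ω, a ω ∂μ) * (∫ ω, b ω ^ 2 ∂μ)) * x * u ^ 2
        + (∫ ω, b ω ^ 3 ∂μ) * u ^ 3 := by
  have bnd1 : ∀ t : ℝ, 0 ≤ t → t ≤ 1 + t ^ 3 := by
    intro t ht; rcases le_total t 1 with h | h
    · nlinarith [pow_nonneg ht 3]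
    · nlinarith [mul_nonneg (mul_nonneg ht (by linarith : (0:ℝ) ≤ t - 1))
        (by linarith : (0:ℝ) ≤ t + 1)]
  have bnd2 : ∀ t : ℝ, 0 ≤ t → t ^ 2 ≤ 1 + t ^ 3 := by
    intro t ht; rcases le_total t 1 with h | h
    · nlinarith [pow_nonneg ht 3, mul_nonneg (by linarith : (0:ℝ) ≤ 1 - t)
        (by linarith : (0:ℝ) ≤ 1 + t)]
    · nlinarith [mul_nonneg (mul_nonneg ht ht) (by linarith : (0:ℝ) ≤ t - 1)]
  have bnd3 : ∀ s t : ℝ, 0 ≤ s → 0 ≤ t → s ^ 2 * t ≤ s ^ 3 + t ^ 3 := by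
    intro s t hs ht
    nlinarith [mul_nonneg (sq_nonneg (s - t)) (by linarith : (0:ℝ) ≤ 2 * s + t),
      pow_nonneg hs 3, pow_nonneg ht 3]
  have ione : Integrable (fun ω => 1 + |a ω| ^ 3) μ := (integrable_const 1).add ha3
  have ioneb : Integrable (fun ω => 1 + |b ω| ^ 3) μ := (integrable_const 1).add hb3
  have isum : Integrable (fun ω => |a ω| ^ 3 + |b ω| ^ 3) μ := ha3.add hb3
  have iA : Integrable a μ := ione.mono' ha.aestronglyMeasurable
    (ae_of_all _ fun ω => by simpa [Real.norm_eq_abs] using bnd1 _ (abs_nonneg (a ω)))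
  have iB : Integrable b μ := ioneb.mono' hb.aestronglyMeasurable
    (ae_of_all _ fun ω => by simpa [Real.norm_eq_abs] using bnd1 _ (abs_nonneg (b ω)))
  have iA2 : Integrable (fun ω => a ω ^ 2) μ := ione.mono' (ha.pow_const 2).aestronglyMeasurable
    (ae_of_all _ fun ω => by
      simpa [Real.norm_eq_abs, abs_pow] using bnd2 _ (abs_nonneg (a ω)))
  have iB2 : Integrable (fun ω => b ω ^ 2) μ := ioneb.mono' (hb.pow_const 2).aestronglyMeasurable
    (ae_of_all _ fun ω => by
      simpa [Real.norm_eq_abs, abs_pow] using bnd2 _ (abs_nonneg (b ω)))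
  have iA3 : Integrable (fun ω => a ω ^ 3) μ := ha3.mono' (ha.pow_const 3).aestronglyMeasurable
    (ae_of_all _ fun ω => by simp [Real.norm_eq_abs, abs_pow])
  have iB3 : Integrable (fun ω => b ω ^ 3) μ := hb3.mono' (hb.pow_const 3).aestronglyMeasurable
    (ae_of_all _ fun ω => by simp [Real.norm_eq_abs, abs_pow])
  have iA2B : Integrable (fun ω => a ω ^ 2 * b ω) μ := isum.mono'
    ((ha.pow_const 2).mul hb).aestronglyMeasurable
    (ae_of_all _ fun ω => by
      have h := bnd3 _ _ (abs_nonneg (a ω)) (abs_nonneg (b ω))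
      rw [Real.norm_eq_abs, abs_mul, abs_pow]; linarith)
  have iAB2 : Integrable (fun ω => a ω * b ω ^ 2) μ := isum.mono'
    (ha.mul (hb.pow_const 2)).aestronglyMeasurable
    (ae_of_all _ fun ω => by
      have h := bnd3 _ _ (abs_nonneg (b ω)) (abs_nonneg (a ω))
      have h2 : |a ω| * |b ω| ^ 2 = |b ω| ^ 2 * |a ω| := mul_comm _ _
      rw [Real.norm_eq_abs, abs_mul, abs_pow]; linarith)
  have e2b : ∫ ω, a ω ^ 2 * b ω ∂μ = (∫ ω, a ω ^ 2 ∂μ) * (∫ ω, b ω ∂μ) :=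
    IndepFun.integral_fun_mul_eq_mul_integral (hab.comp (measurable_id.pow_const 2) measurable_id)
      (ha.pow_const 2).aestronglyMeasurable hb.aestronglyMeasurable
  have eab2 : ∫ ω, a ω * b ω ^ 2 ∂μ = (∫ ω, a ω ∂μ) * (∫ ω, b ω ^ 2 ∂μ) :=
    IndepFun.integral_fun_mul_eq_mul_integral (hab.comp measurable_id (measurable_id.pow_const 2))
      ha.aestronglyMeasurable (hb.pow_const 2).aestronglyMeasurable
  have expand : ∀ ω, (a ω * x + b ω * u) ^ 3
      = x ^ 3 * a ω ^ 3 + (3 * x ^ 2 * u) * (a ω ^ 2 * b ω)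
        + (3 * x * u ^ 2) * (a ω * b ω ^ 2) + u ^ 3 * b ω ^ 3 := fun ω => by ring
  have I1 : Integrable (fun ω => x ^ 3 * a ω ^ 3 + (3 * x ^ 2 * u) * (a ω ^ 2 * b ω)) μ :=
    (iA3.const_mul _).add (iA2B.const_mul _)
  have I2 : Integrable (fun ω => x ^ 3 * a ω ^ 3 + (3 * x ^ 2 * u) * (a ω ^ 2 * b ω)
      + (3 * x * u ^ 2) * (a ω * b ω ^ 2)) μ := I1.add (iAB2.const_mul _)
  simp_rw [expand]
  rw [integral_add I2 (iB3.const_mul _), integral_add I1 (iAB2.const_mul _),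
    integral_add (iA3.const_mul _) (iA2B.const_mul _),
    integral_const_mul, integral_const_mul, integral_const_mul, integral_const_mul,
    e2b, eab2]
  ring

/-- Multi-stage stochastic DP for wind farm power maximization (Theorem 1):
the value functions are cubic, `V_k(x) = Q_k·x³` for `x ≥ 0`, and the supremum in the
dynamic-programming recursion is attained at the linear feedback `u = ψ_k·x`. -/
theorem stmt_6 {Ω : Type*} [MeasurableSpace Ω] (μ : Measure Ω) [IsProbabilityMeasure μ]
    (N : ℕ) (μa Sa Ga μb Sb Gb : ℕ → ℝ)
    (a b : ℕ → Ω → ℝ)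
    (hameas : ∀ k < N, Measurable (a k)) (hbmeas : ∀ k < N, Measurable (b k))
    (hindep : ∀ k < N, IndepFun (a k) (b k) μ)
    (ha3 : ∀ k < N, Integrable (fun ω => |a k ω| ^ 3) μ)
    (hb3 : ∀ k < N, Integrable (fun ω => |b k ω| ^ 3) μ)
    (hμa : ∀ k < N, ∫ ω, a k ω ∂μ = μa k)
    (hSa : ∀ k < N, ∫ ω, (a k ω) ^ 2 ∂μ = Sa k)
    (hGa : ∀ k < N, ∫ ω, (a k ω) ^ 3 ∂μ = Ga k)
    (hμb : ∀ k < N, ∫ ω, b k ω ∂μ = μb k)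
    (hSb : ∀ k < N, ∫ ω, (b k ω) ^ 2 ∂μ = Sb k)
    (hGb : ∀ k < N, ∫ ω, (b k ω) ^ 3 ∂μ = Gb k)
    (Q A B C D ψ ψbar : ℕ → ℝ)
    (hQN : Q N = 0)
    (hA : ∀ k < N, A k = Q (k + 1) * Gb k + 1)
    (hB : ∀ k < N, B k = 3 * Q (k + 1) * Sb k * μa k - 2)
    (hC : ∀ k < N, C k = 3 * Q (k + 1) * Sa k * μb k + 1)
    (hD : ∀ k < N, D k = B k ^ 2 - 3 * A k * C k)
    (hψ : ∀ k < N, ψ k = -(B k + Real.sqrt (D k)) / (3 * A k))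
    (hψbar : ∀ k < N, ψbar k = (-(B k) + Real.sqrt (D k)) / (3 * A k))
    (hQ : ∀ k < N, Q k = (1 - ψ k) ^ 2 * ψ k +
      Q (k + 1) * (Ga k + Gb k * ψ k ^ 3 + 3 * Sb k * μa k * ψ k ^ 2
        + 3 * Sa k * μb k * ψ k))
    (V : ℕ → ℝ → ℝ)
    (hVN : ∀ x : ℝ, V N x = 0)
    (hV : ∀ k < N, ∀ x : ℝ, 0 ≤ x →
      V k x = sSup ((fun u : ℝ =>
        (x - u) ^ 2 * u + ∫ ω, V (k + 1) (a k ω * x + b k ω * u) ∂μ) ''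
        Set.Icc 0 (x / 2)))
    (hVneg : ∀ k < N, ∀ x : ℝ, x < 0 → V k x = Q k * x ^ 3)
    (hApos : ∀ k < N, 0 < A k) (hDnn : ∀ k < N, 0 ≤ D k)
    (hψ0 : ∀ k < N, 0 ≤ ψ k) (hψhalf : ∀ k < N, ψ k ≤ 1 / 2)
    (hψbar_ge : ∀ k < N, 1 / 2 ≤ ψbar k) :
    (∀ k ≤ N, ∀ x : ℝ, 0 ≤ x → V k x = Q k * x ^ 3) ∧
    (∀ k < N, ∀ x : ℝ, 0 ≤ x →
      ψ k * x ∈ Set.Icc (0 : ℝ) (x / 2) ∧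
      (x - ψ k * x) ^ 2 * (ψ k * x)
        + (∫ ω, V (k + 1) (a k ω * x + b k ω * (ψ k * x)) ∂μ) = V k x) := by
  have main : ∀ k, k < N → (∀ y : ℝ, V (k + 1) y = Q (k + 1) * y ^ 3) → ∀ x : ℝ, 0 ≤ x →
      (ψ k * x ∈ Set.Icc (0:ℝ) (x / 2)) ∧
      (∀ u ∈ Set.Icc (0:ℝ) (x / 2),
        (x - u) ^ 2 * u + ∫ ω, V (k + 1) (a k ω * x + b k ω * u) ∂μ ≤ Q k * x ^ 3) ∧
      ((x - ψ k * x) ^ 2 * (ψ k * x)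
        + ∫ ω, V (k + 1) (a k ω * x + b k ω * (ψ k * x)) ∂μ = Q k * x ^ 3) := by
    intro k hk hcube x hx
    have hmem : ψ k * x ∈ Set.Icc (0:ℝ) (x / 2) :=
      ⟨mul_nonneg (hψ0 k hk) hx, by nlinarith [hψhalf k hk, hψ0 k hk]⟩
    have hint : ∀ u : ℝ, ∫ ω, V (k + 1) (a k ω * x + b k ω * u) ∂μ
        = Q (k + 1) * (Ga k * x ^ 3 + 3 * (Sa k * μb k) * x ^ 2 * u
          + 3 * (μa k * Sb k) * x * u ^ 2 + Gb k * u ^ 3) := by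
      intro u
      have hEq : ∀ ω, V (k + 1) (a k ω * x + b k ω * u)
          = Q (k + 1) * (a k ω * x + b k ω * u) ^ 3 := fun ω => hcube _
      simp_rw [hEq]
      rw [integral_const_mul, cubic_moment μ (a k) (b k) (hameas k hk) (hbmeas k hk)
          (hindep k hk) (ha3 k hk) (hb3 k hk) x u,
        hμa k hk, hSa k hk, hGa k hk, hμb k hk, hSb k hk, hGb k hk]
    have hpoly : ∀ v : ℝ, (x - v) ^ 2 * v
        + Q (k + 1) * (Ga k * x ^ 3 + 3 * (Sa k * μb k) * x ^ 2 * v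
          + 3 * (μa k * Sb k) * x * v ^ 2 + Gb k * v ^ 3)
        = A k * v ^ 3 + B k * x * v ^ 2 + C k * x ^ 2 * v + Q (k + 1) * Ga k * x ^ 3 := by
      intro v; rw [hA k hk, hB k hk, hC k hk]; ring
    have hQx : Q k * x ^ 3 = A k * (ψ k * x) ^ 3 + B k * x * (ψ k * x) ^ 2
        + C k * x ^ 2 * (ψ k * x) + Q (k + 1) * Ga k * x ^ 3 := by
      rw [hQ k hk, hA k hk, hB k hk, hC k hk]; ring
    refine ⟨hmem, ?_, ?_⟩
    · rintro u ⟨hu0, hux⟩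
      rw [hint u, hpoly u, hQx]
      have := key_ineq (A k) (B k) (C k) (D k) (ψ k) (ψbar k) x u (hApos k hk) (hDnn k hk)
        (hD k hk) (hψ k hk) (hψbar k hk) (hψhalf k hk) (hψbar_ge k hk) hx hux
      linarith
    · rw [hint, hpoly, hQx]
  have cubeAll : ∀ d : ℕ, d ≤ N → ∀ x : ℝ, V (N - d) x = Q (N - d) * x ^ 3 := by
    intro d
    induction d with
    | zero => intro _ x; simp [hVN, hQN]
    | succ d ih =>
      intro hd x
      have hk : N - (d + 1) < N := by omega
      set k := N - (d + 1) with hkdef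
      have hk1 : k + 1 = N - d := by omega
      have hcube : ∀ y : ℝ, V (k + 1) y = Q (k + 1) * y ^ 3 := by
        rw [hk1]; exact ih (by omega)
      rcases lt_or_ge x 0 with hneg | hpos
      · exact hVneg k hk x hneg
      · obtain ⟨hmem, hub, heq⟩ := main k hk hcube x hpos
        rw [hV k hk x hpos]
        apply IsGreatest.csSup_eq
        constructor
        · exact ⟨ψ k * x, hmem, heq⟩
        · rintro y ⟨u, hu, rfl⟩; exact hub u hu
  have part1 : ∀ k ≤ N, ∀ x : ℝ, 0 ≤ x → V k x = Q k * x ^ 3 := by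
    intro k hk x _
    have := cubeAll (N - k) (by omega) x
    rwa [Nat.sub_sub_self hk] at this
  refine ⟨part1, ?_⟩
  intro k hk x hx
  have hcube : ∀ y : ℝ, V (k + 1) y = Q (k + 1) * y ^ 3 := by
    have h := cubeAll (N - (k + 1)) (by omega)
    rwa [Nat.sub_sub_self (by omega : k + 1 ≤ N)] at h
  obtain ⟨hmem, hub, heq⟩ := main k hk hcube x hx
  exact ⟨hmem, by rw [heq, part1 k hk.le x hx]⟩
end

section
/- On a probability space, let a_0, b_0, …, a_{N−1}, b_{N−1} be mutually independent real-valued random variables, each with finite third absolute moment, and for each k set M_k(γ) := E[(a_k + b_k·γ)³]. Let γ_0, …, γ_{N−1} be real numbers, let x_0 ∈ ℝ be deterministic, and define x_{k+1} := (a_k + b_k·γ_k)·x_k. Define R_N := 0 and R_k := (1 − γ_k)²·γ_k + R_{k+1}·M_k(γ_k) backward for k = N−1,…,0. Then E[ Σ_{k=0}^{N−1} (x_k − γ_k·x_k)²·(γ_k·x_k) ] = R_0 · x_0³. -/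
open MeasureTheory ProbabilityTheory

set_option maxHeartbeats 1000000 in
/-- Under linear feedback `u_k = γ_k·x_k` with mutually independent noises, the expected
total wind-farm power `E[Σ_{k<N} (x_k − γ_k x_k)²(γ_k x_k)]` equals `R₀·x₀³`, where
`R_N = 0` and `R_k = (1 − γ_k)²γ_k + R_{k+1}·M_k(γ_k)` with `M_k(γ) = E[(a_k + b_k γ)³]`. -/
theorem stmt_8 {Ω : Type*} [MeasurableSpace Ω] (μ : Measure Ω) [IsProbabilityMeasure μ]
    (N : ℕ) (a b : ℕ → Ω → ℝ)
    (ha : ∀ k < N, Measurable (a k)) (hb : ∀ k < N, Measurable (b k))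
    (hindep : iIndepFun
      (fun p : Fin N × Bool => if p.2 then b p.1 else a p.1) μ)
    (ha3 : ∀ k < N, Integrable (fun ω => |a k ω| ^ 3) μ)
    (hb3 : ∀ k < N, Integrable (fun ω => |b k ω| ^ 3) μ)
    (M : ℕ → ℝ → ℝ)
    (hM : ∀ k < N, ∀ γk : ℝ, M k γk = ∫ ω, (a k ω + b k ω * γk) ^ 3 ∂μ)
    (γ : ℕ → ℝ) (x0 : ℝ) (x : ℕ → Ω → ℝ)
    (hx0 : ∀ ω, x 0 ω = x0)
    (hx : ∀ k < N, ∀ ω, x (k + 1) ω = (a k ω + b k ω * γ k) * x k ω)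
    (R : ℕ → ℝ)
    (hRN : R N = 0)
    (hR : ∀ k < N, R k = (1 - γ k) ^ 2 * γ k + R (k + 1) * M k (γ k)) :
    ∫ ω, ∑ k ∈ Finset.range N,
        (x k ω - γ k * x k ω) ^ 2 * (γ k * x k ω) ∂μ = R 0 * x0 ^ 3 := by
  classical
  set c : ℕ → Ω → ℝ := fun k ω => a k ω + b k ω * γ k with hc_def
  have hc_meas : ∀ k < N, Measurable (c k) := fun k hk =>
    ((ha k hk).add ((hb k hk).mul_const _))
  -- integrability of c k ^ 3
  have hc3 : ∀ k < N, Integrable (fun ω => (c k ω) ^ 3) μ := by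
    intro k hk
    refine Integrable.mono' (g := fun ω => 4 * (|a k ω| ^ 3 + |γ k| ^ 3 * |b k ω| ^ 3))
      ((((ha3 k hk).add ((hb3 k hk).const_mul _))).const_mul 4)
      (((hc_meas k hk).pow_const 3).aestronglyMeasurable) ?_
    filter_upwards with ω
    have h1 : |c k ω| ≤ |a k ω| + |b k ω| * |γ k| := by
      calc |c k ω| ≤ |a k ω| + |b k ω * γ k| := abs_add_le _ _
        _ = |a k ω| + |b k ω| * |γ k| := by rw [abs_mul]
    have h2 : |c k ω| ^ 3 ≤ (|a k ω| + |b k ω| * |γ k|) ^ 3 :=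
      pow_le_pow_left₀ (abs_nonneg _) h1 3
    have hna := abs_nonneg (a k ω); have hnb := abs_nonneg (b k ω)
    have hng := abs_nonneg (γ k)
    rw [Real.norm_eq_abs, abs_pow]
    nlinarith [sq_nonneg (|a k ω| - |b k ω| * |γ k|), mul_nonneg hnb hng,
      sq_nonneg (|a k ω| + |b k ω| * |γ k|)]
  -- measurability of the underlying family
  have hfm : ∀ p : Fin N × Bool,
      Measurable ((fun p : Fin N × Bool => if p.2 then b (p.1 : ℕ) else a (p.1 : ℕ)) p) := by
    rintro ⟨i, _ | _⟩
    · simpa using ha i i.2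
    · simpa using hb i i.2
  -- key independence: product of c j ^ 3 for j < k is independent of c k ^ 3
  have key : ∀ k, ∀ hk : k < N,
      IndepFun (fun ω => ∏ j ∈ Finset.range k, (c j ω) ^ 3) (fun ω => (c k ω) ^ 3) μ := by
    intro k hk
    set S : Finset (Fin N × Bool) := Finset.univ.filter (fun p => (p.1 : ℕ) < k) with hS
    set T : Finset (Fin N × Bool) := Finset.univ.filter (fun p => (p.1 : ℕ) = k) with hT
    have hST : Disjoint S T := by
      rw [Finset.disjoint_left]
      intro p hp hp'
      simp only [hS, hT, Finset.mem_filter] at hp hp'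
      omega
    have base := hindep.indepFun_finset S T hST hfm
    set gS : ((p : S) → ℝ) → ℝ := fun v => ∏ j ∈ (Finset.range k).attach,
      (v ⟨(⟨(j : ℕ), lt_trans (Finset.mem_range.mp j.2) hk⟩, false),
          by simp [hS, Finset.mem_range.mp j.2]⟩
       + v ⟨(⟨(j : ℕ), lt_trans (Finset.mem_range.mp j.2) hk⟩, true),
          by simp [hS, Finset.mem_range.mp j.2]⟩ * γ (j : ℕ)) ^ 3 with hgS
    set gT : ((p : T) → ℝ) → ℝ := fun v =>
      (v ⟨(⟨k, hk⟩, false), by simp [hT]⟩ + v ⟨(⟨k, hk⟩, true), by simp [hT]⟩ * γ k) ^ 3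
      with hgT
    have hgSm : Measurable gS := by
      rw [hgS]
      apply Finset.measurable_prod
      intro j _
      apply Measurable.pow_const
      apply Measurable.add
      · exact measurable_pi_apply _
      · exact (measurable_pi_apply _).mul_const _
    have hgTm : Measurable gT := by
      rw [hgT]
      apply Measurable.pow_const
      apply Measurable.add
      · exact measurable_pi_apply _
      · exact (measurable_pi_apply _).mul_const _
    have hcomp := base.comp hgSm hgTm
    have e1 : (fun ω => ∏ j ∈ Finset.range k, (c j ω) ^ 3)
        = gS ∘ (fun ω (i : S) => if (i : Fin N × Bool).2 then b ((i : Fin N × Bool).1 : ℕ) ω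
            else a ((i : Fin N × Bool).1 : ℕ) ω) := by
      funext ω
      rw [Function.comp_apply, hgS]
      simp only [Bool.false_eq_true, if_false, if_true]
      rw [Finset.prod_attach (Finset.range k) (fun j => (a j ω + b j ω * γ j) ^ 3)]
    have e2 : (fun ω => (c k ω) ^ 3)
        = gT ∘ (fun ω (i : T) => if (i : Fin N × Bool).2 then b ((i : Fin N × Bool).1 : ℕ) ω
            else a ((i : Fin N × Bool).1 : ℕ) ω) := by
      funext ω
      rw [Function.comp_apply, hgT]
      simp only [Bool.false_eq_true, if_false, if_true]
      rfl
    rw [e1, e2]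
    exact hcomp
  -- expectation of products
  have main : ∀ k, k ≤ N → Integrable (fun ω => ∏ j ∈ Finset.range k, (c j ω) ^ 3) μ ∧
      (∫ ω, ∏ j ∈ Finset.range k, (c j ω) ^ 3 ∂μ) = ∏ j ∈ Finset.range k, M j (γ j) := by
    intro k
    induction k with
    | zero => intro _; simp
    | succ k ih =>
      intro hk
      have hkN : k < N := hk
      obtain ⟨ih1, ih2⟩ := ih hkN.le
      have hind := key k hkN
      have hck : Integrable (fun ω => (c k ω) ^ 3) μ := hc3 k hkN
      have hmul : Integrable ((fun ω => ∏ j ∈ Finset.range k, (c j ω) ^ 3) *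
          (fun ω => (c k ω) ^ 3)) μ := hind.integrable_mul ih1 hck
      constructor
      · simp only [Finset.prod_range_succ]
        exact hmul
      · simp only [Finset.prod_range_succ]
        have := hind.integral_mul_eq_mul_integral ih1.aestronglyMeasurable hck.aestronglyMeasurable
        calc (∫ ω, (∏ j ∈ Finset.range k, (c j ω) ^ 3) * (c k ω) ^ 3 ∂μ)
            = (∫ ω, ∏ j ∈ Finset.range k, (c j ω) ^ 3 ∂μ) * ∫ ω, (c k ω) ^ 3 ∂μ := this
          _ = (∏ j ∈ Finset.range k, M j (γ j)) * M k (γ k) := by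
              rw [ih2, hM k hkN]
  -- closed form for x
  have hxk : ∀ k, k ≤ N → ∀ ω, x k ω = x0 * ∏ j ∈ Finset.range k, c j ω := by
    intro k
    induction k with
    | zero => intro _ ω; simp [hx0 ω]
    | succ k ih =>
      intro hk ω
      rw [hx k hk ω, ih (Nat.le_of_succ_le hk) ω, Finset.prod_range_succ]
      ring
  -- rewrite the summand
  have hterm : ∀ k, k < N → ∀ ω, (x k ω - γ k * x k ω) ^ 2 * (γ k * x k ω)
      = ((1 - γ k) ^ 2 * γ k * x0 ^ 3) * ∏ j ∈ Finset.range k, (c j ω) ^ 3 := by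
    intro k hk ω
    rw [hxk k hk.le ω, Finset.prod_pow]
    ring
  -- closed form for R
  have hRform : ∀ t s, s + t = N →
      R s = ∑ k ∈ Finset.Ico s N, (1 - γ k) ^ 2 * γ k * ∏ j ∈ Finset.Ico s k, M j (γ j) := by
    intro t
    induction t with
    | zero =>
      intro s hs
      have : s = N := by omega
      subst this
      simp [hRN]
    | succ t ih =>
      intro s hs
      have hsN : s < N := by omega
      rw [hR s hsN, ih (s + 1) (by omega), Finset.sum_eq_sum_Ico_succ_bot hsN]
      congr 1
      · simp
      · rw [Finset.sum_mul]
        refine Finset.sum_congr rfl fun k hk => ?_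
        rw [Finset.mem_Ico] at hk
        rw [Finset.prod_eq_prod_Ico_succ_bot (show s < k by omega)]
        ring
  -- put everything together
  have hint : ∀ k ∈ Finset.range N,
      Integrable (fun ω => (x k ω - γ k * x k ω) ^ 2 * (γ k * x k ω)) μ := by
    intro k hk
    rw [Finset.mem_range] at hk
    have : (fun ω => (x k ω - γ k * x k ω) ^ 2 * (γ k * x k ω))
        = fun ω => ((1 - γ k) ^ 2 * γ k * x0 ^ 3) * ∏ j ∈ Finset.range k, (c j ω) ^ 3 := by
      funext ω; exact hterm k hk ω
    rw [this]
    exact ((main k hk.le).1).const_mul _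
  rw [integral_finset_sum _ hint]
  calc ∑ k ∈ Finset.range N, ∫ ω, (x k ω - γ k * x k ω) ^ 2 * (γ k * x k ω) ∂μ
      = ∑ k ∈ Finset.range N, ((1 - γ k) ^ 2 * γ k * x0 ^ 3)
          * ∏ j ∈ Finset.range k, M j (γ j) := by
        refine Finset.sum_congr rfl fun k hk => ?_
        rw [Finset.mem_range] at hk
        rw [show (fun ω => (x k ω - γ k * x k ω) ^ 2 * (γ k * x k ω))
          = fun ω => ((1 - γ k) ^ 2 * γ k * x0 ^ 3) * ∏ j ∈ Finset.range k, (c j ω) ^ 3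
          from funext fun ω => hterm k hk ω]
        rw [integral_const_mul, (main k hk.le).2]
    _ = R 0 * x0 ^ 3 := by
        rw [hRform N 0 (by omega)]
        simp only [← Finset.range_eq_Ico]
        rw [Finset.sum_mul]
        exact Finset.sum_congr rfl fun k _ => by ring
end

section
/- Fix N ∈ ℕ and real sequences μ_{a,k}, Σ_{a,k}, Γ_{a,k}, μ_{b,k}, Σ_{b,k}, Γ_{b,k} for k = 0,…,N−1, and set M_k(γ) := Γ_{a,k} + Γ_{b,k}·γ³ + 3·Σ_{b,k}·μ_{a,k}·γ² + 3·Σ_{a,k}·μ_{b,k}·γ. Define backward: Q_N := 0 and, for k = N−1,…,0, A_k := Q_{k+1}·Γ_{b,k} + 1, B_k := 3·Q_{k+1}·Σ_{b,k}·μ_{a,k} − 2, C_k := 3·Q_{k+1}·Σ_{a,k}·μ_{b,k} + 1, D_k := B_k² − 3·A_k·C_k, ψ_k := −(B_k + √D_k)/(3·A_k), ψ̄_k := (−B_k + √D_k)/(3·A_k), Q_k := (1 − ψ_k)²·ψ_k + Q_{k+1}·M_k(ψ_k). Assume for every k that A_k > 0, D_k ≥ 0, 0 ≤ ψ_k ≤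 1/2, ψ̄_k ≥ 1/2, and that M_k(γ) ≥ 0 for all γ ∈ [0, 1/2]. Then for any gains γ_0, …, γ_{N−1} ∈ [0, 1/2], the coefficients defined by R_N := 0 and R_k := (1 − γ_k)²·γ_k + R_{k+1}·M_k(γ_k) satisfy R_0 ≤ Q_0. -/
lemma cubic_max_aux (A B C s g p : ℝ) (hA : 0 < A) (hs : 0 ≤ s)
    (hs2 : s ^ 2 = B ^ 2 - 3 * A * C)
    (hp : 3 * A * p = -(B + s))
    (hg : g ≤ 1 / 2)
    (hbar : 3 * A * (1 / 2) ≤ -B + s) :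
    A * g ^ 3 + B * g ^ 2 + C * g ≤ A * p ^ 3 + B * p ^ 2 + C * p := by
  have hsv : s = -B - 3 * A * p := by linarith
  have hC : 3 * A * C = -6 * A * B * p - 9 * A ^ 2 * p ^ 2 := by
    rw [hsv] at hs2; nlinarith [hs2]
  have hB' : B ≤ -3 * A / 4 - 3 * A * p / 2 := by
    rw [hsv] at hbar; linarith
  have hfac : 0 ≤ -(A * g + 2 * A * p + B) := by nlinarith
  have main : 3 * A * ((A * p ^ 3 + B * p ^ 2 + C * p) - (A * g ^ 3 + B * g ^ 2 + C * g))
      = 3 * A * (p - g) ^ 2 * (-(A * g + 2 * A * p + B)) := by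
    linear_combination (p - g) * hC
  nlinarith [mul_nonneg (mul_nonneg (by linarith : (0:ℝ) ≤ 3 * A) (sq_nonneg (p - g))) hfac, main]

/-- The dynamic-programming gains `ψ_k` are optimal among linear feedback gain
sequences: for any gains `γ_k ∈ [0, 1/2]`, the induced expected-power coefficient
`R_0` is at most the optimal coefficient `Q_0`. -/
theorem stmt_9 (N : ℕ) (μa Sa Ga μb Sb Gb : ℕ → ℝ)
    (M : ℕ → ℝ → ℝ)
    (hM : ∀ k < N, ∀ γ : ℝ, M k γ =
      Ga k + Gb k * γ ^ 3 + 3 * Sb k * μa k * γ ^ 2 + 3 * Sa k * μb k * γ)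
    (Q A B C D ψ ψbar : ℕ → ℝ)
    (hQN : Q N = 0)
    (hA : ∀ k < N, A k = Q (k + 1) * Gb k + 1)
    (hB : ∀ k < N, B k = 3 * Q (k + 1) * Sb k * μa k - 2)
    (hC : ∀ k < N, C k = 3 * Q (k + 1) * Sa k * μb k + 1)
    (hD : ∀ k < N, D k = B k ^ 2 - 3 * A k * C k)
    (hψ : ∀ k < N, ψ k = -(B k + Real.sqrt (D k)) / (3 * A k))
    (hψbar : ∀ k < N, ψbar k = (-(B k) + Real.sqrt (D k)) / (3 * A k))
    (hQ : ∀ k < N, Q k = (1 - ψ k) ^ 2 * ψ k + Q (k + 1) * M k (ψ k))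
    (hApos : ∀ k < N, 0 < A k) (hDnn : ∀ k < N, 0 ≤ D k)
    (hψ0 : ∀ k < N, 0 ≤ ψ k) (hψhalf : ∀ k < N, ψ k ≤ 1 / 2)
    (hψbar_ge : ∀ k < N, 1 / 2 ≤ ψbar k)
    (hMnn : ∀ k < N, ∀ γ ∈ Set.Icc (0 : ℝ) (1 / 2), 0 ≤ M k γ)
    (γ : ℕ → ℝ) (hγ : ∀ k < N, γ k ∈ Set.Icc (0 : ℝ) (1 / 2))
    (R : ℕ → ℝ)
    (hRN : R N = 0)
    (hR : ∀ k < N, R k = (1 - γ k) ^ 2 * γ k + R (k + 1) * M k (γ k)) :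
    R 0 ≤ Q 0 := by
  suffices h : ∀ j, ∀ k, k + j = N → R k ≤ Q k from h N 0 (by omega)
  intro j
  induction j with
  | zero =>
    intro k hk
    have : k = N := by omega
    rw [this, hRN, hQN]
  | succ j ih =>
    intro k hk
    have hkN : k < N := by omega
    have hnext : R (k + 1) ≤ Q (k + 1) := ih (k + 1) (by omega)
    have hMγ : 0 ≤ M k (γ k) := hMnn k hkN _ (hγ k hkN)
    obtain ⟨hγ0, hγh⟩ := hγ k hkN
    have hψhalf' := hψhalf k hkN
    have hψ0' := hψ0 k hkN
    have hApos' := hApos k hkN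
    have h3A : (0:ℝ) < 3 * A k := by linarith
    -- step 1 : R k ≤ value of the cubic at γ k plus Q(k+1) * Ga k, etc.
    set s := Real.sqrt (D k) with hsdef
    have hs : 0 ≤ s := Real.sqrt_nonneg _
    have hs2 : s ^ 2 = B k ^ 2 - 3 * A k * C k := by
      rw [hsdef, Real.sq_sqrt (hDnn k hkN)]; exact hD k hkN
    have hpeq : 3 * A k * ψ k = -(B k + s) := by
      rw [hψ k hkN]; field_simp; rw [hsdef]
    have hbar : 3 * A k * (1 / 2) ≤ -(B k) + s := by
      have h1 := hψbar_ge k hkN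
      rw [hψbar k hkN] at h1
      rw [le_div_iff₀ h3A] at h1
      rw [hsdef]; linarith
    have hcubic := cubic_max_aux (A k) (B k) (C k) s (γ k) (ψ k) hApos' hs hs2 hpeq hγh hbar
    -- rewrite both sides as the cubic plus constant
    have hval : ∀ g : ℝ, (1 - g) ^ 2 * g + Q (k + 1) * M k g
        = A k * g ^ 3 + B k * g ^ 2 + C k * g + Q (k + 1) * Ga k := by
      intro g
      rw [hM k hkN, hA k hkN, hB k hkN, hC k hkN]; ring
    have hMψ : 0 ≤ M k (ψ k) := hMnn k hkN _ ⟨hψ0', hψhalf'⟩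
    calc R k = (1 - γ k) ^ 2 * γ k + R (k + 1) * M k (γ k) := hR k hkN
      _ ≤ (1 - γ k) ^ 2 * γ k + Q (k + 1) * M k (γ k) := by
          have := mul_le_mul_of_nonneg_right hnext hMγ
          linarith
      _ = A k * γ k ^ 3 + B k * γ k ^ 2 + C k * γ k + Q (k + 1) * Ga k := hval _
      _ ≤ A k * ψ k ^ 3 + B k * ψ k ^ 2 + C k * ψ k + Q (k + 1) * Ga k := by linarith
      _ = (1 - ψ k) ^ 2 * ψ k + Q (k + 1) * M k (ψ k) := (hval _).symm
      _ = Q k := (hQ k hkN).symm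
end
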